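/- Let φ : L → L be a function with φ(a) ≤ a for all a ∈ L. If a proper element q ∈ L is φ-δ₁-primary (where δ₁(a) = √a) and satisfies √(φ(q)) = φ(√q), then √q is a φ-prime element of L. -/

import Mathlib

open CompleteLattice

variable {L : Type*} [CompleteLattice L] [CommMonoid L]

/-- The compactness notion of the older Mathlib (`CompleteLattice.IsCompactElement`). -/
def CompleteLattice.IsCompactElement {α : Type*} [CompleteLattice α] (k : α) :=
  ∀ s : Set α, k ≤ sSup s → ∃ t : Finset α, ↑t ⊆ s ∧ k ≤ t.sup id

/-- `L` is a compactly generated multiplicative lattice: multiplication distributes over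
arbitrary joins, the top element is the multiplicative identity, `1` is a compact element,
every element is a join of compact elements, and products of compact elements are compact. -/
def IsCGMultLattice (L : Type*) [CompleteLattice L] [CommMonoid L] : Prop :=
  (∀ (a : L) (S : Set L), a * sSup S = ⨆ b ∈ S, a * b) ∧
  ((1 : L) = ⊤) ∧
  CompleteLattice.IsCompactElement (1 : L) ∧
  (∀ a : L, a = sSup {x : L | CompleteLattice.IsCompactElement x ∧ x ≤ a}) ∧
  (∀ x y : L, CompleteLattice.IsCompactElement x → CompleteLattice.IsCompactElement y →
    CompleteLattice.IsCompactElement (x * y))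

/-- An expansion function on `L`: `a ≤ δ a` and `δ` is monotone. -/
def IsExpansion (δ : L → L) : Prop :=
  (∀ a : L, a ≤ δ a) ∧ ∀ a b : L, a ≤ b → δ a ≤ δ b

/-- A proper element `p` is `φ`-`δ`-primary if `a*b ≤ p` and `a*b ≰ φ p` imply
`a ≤ p` or `b ≤ δ p`. -/
def IsPhiDeltaPrimary (φ δ : L → L) (p : L) : Prop :=
  p < 1 ∧ ∀ a b : L, a * b ≤ p → ¬ a * b ≤ φ p → a ≤ p ∨ b ≤ δ p

/-- A proper element `p` is `δ`-primary if `a*b ≤ p` implies `a ≤ p` or `b ≤ δ p`. -/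
def IsDeltaPrimary (δ : L → L) (p : L) : Prop :=
  p < 1 ∧ ∀ a b : L, a * b ≤ p → a ≤ p ∨ b ≤ δ p

/-- A proper element `p` is `φ`-prime if `a*b ≤ p` and `a*b ≰ φ p` imply
`a ≤ p` or `b ≤ p`. -/
def IsPhiPrime (φ : L → L) (p : L) : Prop :=
  p < 1 ∧ ∀ a b : L, a * b ≤ p → ¬ a * b ≤ φ p → a ≤ p ∨ b ≤ p

/-- The residual `(a : b)`, the join of all `x` with `x * b ≤ a`. -/
def lres (a b : L) : L := sSup {x : L | x * b ≤ a}

/-- The radical `√a`, the join of all compact `x` with `x ^ n ≤ a` for some `n ≥ 1`. -/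
def lradical (a : L) : L :=
  sSup {x : L | CompleteLattice.IsCompactElement x ∧ ∃ n : ℕ, 0 < n ∧ x ^ n ≤ a}

/-- A principal element of a multiplicative lattice. -/
def IsPrincipalElem (e : L) : Prop :=
  ∀ a b : L, a ⊓ b * e = (lres a e ⊓ b) * e ∧ lres (a * e ⊔ b) e = lres b e ⊔ a

/-- A Noether lattice: modular, principally generated, satisfying the ascending
chain condition. -/
def IsNoetherLattice (L : Type*) [CompleteLattice L] [CommMonoid L] : Prop :=
  IsModularLattice L ∧ (∀ a : L, a = sSup {e : L | IsPrincipalElem e ∧ e ≤ a}) ∧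
  WellFoundedGT L

/-- A maximal element: proper, and `m < x ≤ 1` implies `x = 1`. -/
def IsMaximalElem (m : L) : Prop :=
  m < 1 ∧ ∀ x : L, m < x → x ≤ 1 → x = 1

section MyAux
variable (hd : ∀ (a : L) (S : Set L), a * sSup S = ⨆ b ∈ S, a * b)
variable (h1 : (1 : L) = ⊤)
include hd

lemma my_mul_sup (a b c : L) : a * (b ⊔ c) = a * b ⊔ a * c := by
  rw [← sSup_pair, hd, iSup_pair]

lemma my_mul_le_mul_right (a : L) {b c : L} (h : b ≤ c) : a * b ≤ a * c := by
  have : a * c = a * b ⊔ a * c := by rw [← my_mul_sup hd, sup_eq_right.mpr h]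
  rw [this]; exact le_sup_left

lemma my_mul_le_mul {a b c d : L} (h1 : a ≤ b) (h2 : c ≤ d) : a * c ≤ b * d := by
  calc a * c ≤ a * d := my_mul_le_mul_right hd a h2
    _ = d * a := mul_comm _ _
    _ ≤ d * b := my_mul_le_mul_right hd d h1
    _ = b * d := mul_comm _ _

lemma my_pow_le_pow {a b : L} (h : a ≤ b) (n : ℕ) : a ^ n ≤ b ^ n := by
  induction n with
  | zero => simp
  | succ k ih => rw [pow_succ, pow_succ]; exact my_mul_le_mul hd ih h

lemma my_mul_iSup {ι : Sort*} (a : L) (f : ι → L) : a * (⨆ i, f i) = ⨆ i, a * f i := by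
  rw [iSup, hd, iSup_range]

include h1

lemma my_mul_le_left (a b : L) : a * b ≤ a := by
  have : a * b ≤ a * 1 := my_mul_le_mul_right hd a (h1 ▸ le_top)
  simpa using this

lemma my_mul_le_right (a b : L) : a * b ≤ b := by
  rw [mul_comm]; exact my_mul_le_left hd h1 b a

lemma my_pow_le_pow_of_le {a : L} {m n : ℕ} (h : m ≤ n) : a ^ n ≤ a ^ m := by
  rw [← Nat.add_sub_cancel' h, pow_add]
  exact my_mul_le_left hd h1 _ _

/-- binomial-type bound -/
lemma my_sup_pow_le {x y q : L} {m n : ℕ} (hx : x ^ m ≤ q) (hy : y ^ n ≤ q) :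
    (x ⊔ y) ^ (m + n) ≤ q := by
  have key : ∀ k : ℕ, (x ⊔ y) ^ k ≤ ⨆ i : Fin (k + 1), x ^ (i : ℕ) * y ^ (k - (i : ℕ)) := by
    intro k
    induction k with
    | zero =>
      simpa using le_iSup (fun i : Fin 1 => x ^ (i : ℕ) * y ^ (0 - (i : ℕ))) ⟨0, by omega⟩
    | succ k ih =>
      rw [pow_succ]
      calc (x ⊔ y) ^ k * (x ⊔ y)
          ≤ (⨆ i : Fin (k + 1), x ^ (i : ℕ) * y ^ (k - (i : ℕ))) * (x ⊔ y) := by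
            rw [mul_comm _ (x ⊔ y), mul_comm _ (x ⊔ y)]
            exact my_mul_le_mul_right hd _ ih
        _ = ⨆ i : Fin (k + 1), (x ⊔ y) * (x ^ (i : ℕ) * y ^ (k - (i : ℕ))) := by
            rw [mul_comm]; exact my_mul_iSup hd _ _
        _ ≤ ⨆ i : Fin (k + 2), x ^ (i : ℕ) * y ^ (k + 1 - (i : ℕ)) := by
            apply iSup_le
            intro i
            have hdist : (x ^ (i : ℕ) * y ^ (k - (i : ℕ))) * (x ⊔ y)
                = x ^ ((i : ℕ) + 1) * y ^ (k - (i : ℕ))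
                  ⊔ x ^ (i : ℕ) * y ^ (k - (i : ℕ) + 1) := by
              rw [my_mul_sup hd]
              congr 1
              · rw [mul_right_comm, ← pow_succ]
              · rw [mul_assoc, ← pow_succ]
            rw [mul_comm, hdist]
            apply sup_le
            · have h' : k + 1 - ((i : ℕ) + 1) = k - (i : ℕ) := by omega
              have := le_iSup (fun j : Fin (k + 2) => x ^ (j : ℕ) * y ^ (k + 1 - (j : ℕ)))
                ⟨(i : ℕ) + 1, by omega⟩
              simpa [h'] using this
            · have h' : k + 1 - (i : ℕ) = k - (i : ℕ) + 1 := by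
                have := i.isLt; omega
              have := le_iSup (fun j : Fin (k + 2) => x ^ (j : ℕ) * y ^ (k + 1 - (j : ℕ)))
                ⟨(i : ℕ), by omega⟩
              simpa [h'] using this
  refine (key (m + n)).trans (iSup_le fun i => ?_)
  rcases le_or_gt m (i : ℕ) with h | h
  · calc x ^ (i : ℕ) * y ^ (m + n - (i : ℕ)) ≤ x ^ (i : ℕ) := my_mul_le_left hd h1 _ _
      _ ≤ x ^ m := my_pow_le_pow_of_le hd h1 h
      _ ≤ q := hx
  · have hn : n ≤ m + n - (i : ℕ) := by omega
    calc x ^ (i : ℕ) * y ^ (m + n - (i : ℕ)) ≤ y ^ (m + n - (i : ℕ)) :=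
        my_mul_le_right hd h1 _ _
      _ ≤ y ^ n := my_pow_le_pow_of_le hd h1 hn
      _ ≤ q := hy
end MyAux

section MyAux2
variable (hd : ∀ (a : L) (S : Set L), a * sSup S = ⨆ b ∈ S, a * b)
variable (h1 : (1 : L) = ⊤)
include hd h1

lemma my_finset_sup_pow (q : L) (t : Finset L)
    (h : ∀ x ∈ t, ∃ n : ℕ, 0 < n ∧ x ^ n ≤ q) :
    ∃ N : ℕ, 0 < N ∧ (t.sup id) ^ N ≤ q := by
  classical
  induction t using Finset.induction_on with
  | empty => exact ⟨1, one_pos, by simpa using bot_le⟩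
  | @insert a t ha ih =>
    obtain ⟨m, hm, hma⟩ := h a (Finset.mem_insert_self a t)
    obtain ⟨N, hN, hNt⟩ := ih (fun x hx => h x (Finset.mem_insert_of_mem hx))
    refine ⟨m + N, by omega, ?_⟩
    rw [Finset.sup_insert]
    exact my_sup_pow_le hd h1 hma hNt

lemma my_compact_le_radical {z q : L} (hz : CompleteLattice.IsCompactElement z) (h : z ≤ lradical q) :
    ∃ N : ℕ, 0 < N ∧ z ^ N ≤ q := by
  obtain ⟨t, hts, hzt⟩ := hz _ h
  obtain ⟨N, hN, hNq⟩ := my_finset_sup_pow hd h1 q t (fun x hx => (hts hx).2)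
  exact ⟨N, hN, (my_pow_le_pow hd hzt N).trans hNq⟩

end MyAux2

lemma my_compact_pow (h1c : CompleteLattice.IsCompactElement (1 : L))
    (hmul : ∀ x y : L, CompleteLattice.IsCompactElement x → CompleteLattice.IsCompactElement y → CompleteLattice.IsCompactElement (x * y))
    {x : L} (hx : CompleteLattice.IsCompactElement x) (n : ℕ) : CompleteLattice.IsCompactElement (x ^ n) := by
  induction n with
  | zero => simpa using h1c
  | succ k ih => rw [pow_succ]; exact hmul _ _ ih hx

omit [CommMonoid L] in
lemma my_compact_sup {x y : L} (hx : CompleteLattice.IsCompactElement x) (hy : CompleteLattice.IsCompactElement y) :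
    CompleteLattice.IsCompactElement (x ⊔ y) := by
  classical
  intro s hs
  obtain ⟨t1, ht1, hx1⟩ := hx s (le_sup_left.trans hs)
  obtain ⟨t2, ht2, hy2⟩ := hy s (le_sup_right.trans hs)
  refine ⟨t1 ∪ t2, by rw [Finset.coe_union]; exact Set.union_subset ht1 ht2, ?_⟩
  rw [Finset.sup_union]
  exact sup_le_sup hx1 hy2

lemma my_le_radical {x q : L} (hx : CompleteLattice.IsCompactElement x) {n : ℕ} (hn : 0 < n)
    (h : x ^ n ≤ q) : x ≤ lradical q :=
  le_sSup ⟨hx, n, hn, h⟩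


theorem radical_phiPrime (hL : IsCGMultLattice L)
    (φ : L → L) (hφ : ∀ a : L, φ a ≤ a)
    (q : L) (hq : IsPhiDeltaPrimary φ (fun a : L => lradical a) q)
    (hrad : lradical (φ q) = φ (lradical q)) :
    IsPhiPrime φ (lradical q) := by
  refine show lradical q < 1 ∧ _ from ?_
  obtain ⟨hd, h1, h1c, hgen, hmulc⟩ := hL
  set r := lradical q with hr
  have hproper : r < 1 := by
    refine lt_of_le_of_ne (h1 ▸ le_top) ?_
    intro htop
    have h1le : (1 : L) ≤ r := htop.ge
    obtain ⟨N, hN, hNq⟩ := my_compact_le_radical hd h1 h1c h1le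
    rw [one_pow] at hNq
    exact hq.1.ne (le_antisymm (h1 ▸ le_top) hNq)
  refine ⟨hproper, fun a b hab hnab => ?_⟩
  by_contra hcon
  push_neg at hcon
  obtain ⟨hna, hnb⟩ := hcon
  -- compact pieces below a and b that are not below r
  obtain ⟨x0, hx0, hx0r⟩ : ∃ x ∈ {x : L | CompleteLattice.IsCompactElement x ∧ x ≤ a}, ¬ x ≤ r := by
    by_contra hall; push_neg at hall
    exact hna ((hgen a).trans_le (sSup_le fun x hx => hall x hx))
  obtain ⟨y0, hy0, hy0r⟩ : ∃ y ∈ {y : L | CompleteLattice.IsCompactElement y ∧ y ≤ b}, ¬ y ≤ r := by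
    by_contra hall; push_neg at hall
    exact hnb ((hgen b).trans_le (sSup_le fun y hy => hall y hy))
  -- the key trichotomy
  have key : ∀ x y : L, CompleteLattice.IsCompactElement x → CompleteLattice.IsCompactElement y → ¬ x ≤ r → ¬ y ≤ r →
      x * y ≤ r → x * y ≤ φ r := by
    intro x y hxc hyc hxr hyr hxyr
    have hxyc := hmulc x y hxc hyc
    obtain ⟨n, hn, hpow⟩ := my_compact_le_radical hd h1 hxyc hxyr
    by_cases hc : (x * y) ^ n ≤ φ q
    · have : x * y ≤ lradical (φ q) := my_le_radical hxyc hn hc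
      rwa [hrad] at this
    · rcases hq.2 (x ^ n) (y ^ n) (by rw [← mul_pow]; exact hpow) (by rwa [← mul_pow]) with
        h' | h'
      · exact absurd (my_le_radical hxc hn h') hxr
      · have hync := my_compact_pow h1c hmulc hyc n
        obtain ⟨m, hm, hmq⟩ := my_compact_le_radical hd h1 hync h'
        rw [← pow_mul] at hmq
        exact absurd (my_le_radical hyc (by positivity : 0 < n * m) hmq) hyr
  refine hnab ?_
  calc a * b = b * sSup {x : L | CompleteLattice.IsCompactElement x ∧ x ≤ a} := by rw [← hgen a, mul_comm]
    _ = ⨆ x ∈ {x : L | CompleteLattice.IsCompactElement x ∧ x ≤ a}, b * x := hd b _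
    _ ≤ φ r := by
        refine iSup_le fun x => iSup_le fun hx => ?_
        calc b * x = x * sSup {y : L | CompleteLattice.IsCompactElement y ∧ y ≤ b} := by
              rw [← hgen b, mul_comm]
          _ = ⨆ y ∈ {y : L | CompleteLattice.IsCompactElement y ∧ y ≤ b}, x * y := hd x _
          _ ≤ φ r := by
              refine iSup_le fun y => iSup_le fun hy => ?_
              have hXc := my_compact_sup hx.1 hx0.1
              have hYc := my_compact_sup hy.1 hy0.1
              have hXr : ¬ (x ⊔ x0) ≤ r := fun hh => hx0r (le_sup_right.trans hh)
              have hYr : ¬ (y ⊔ y0) ≤ r := fun hh => hy0r (le_sup_right.trans hh)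
              have hXY : (x ⊔ x0) * (y ⊔ y0) ≤ r :=
                le_trans (my_mul_le_mul hd (sup_le hx.2 hx0.2) (sup_le hy.2 hy0.2)) hab
              exact (my_mul_le_mul hd le_sup_left le_sup_left).trans
                (key _ _ hXc hYc hXr hYr hXY)
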